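/- For a perfect matching β of [l′+k′] and an (l+k)\n-diagram α, under the canonical isomorphisms (ℝⁿ)^{⊗(k′+k)} ≅ (ℝⁿ)^{⊗k′} ⊗ (ℝⁿ)^{⊗k} and (ℝⁿ)^{⊗(l′+l)} ≅ (ℝⁿ)^{⊗l′} ⊗ (ℝⁿ)^{⊗l}, one has E_β ⊗ H_α = H_{β⊗α}, where β⊗α is the ((l′+l)+(k′+k))\n-diagram obtained by placing the diagram of β to the left of the diagram of α. -/
import Mathlib


open Classical
noncomputable section

/-- The matrix `D_π : (ℝⁿ)^{⊗k} → (ℝⁿ)^{⊗l}` associated to a set partition `π` of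
`[l+k]` (encoded as a setoid on `Fin (l+k)`, top row first). -/
def Dmat (n l k : ℕ) (π : Setoid (Fin (l + k))) :
    Matrix (Fin l → Fin n) (Fin k → Fin n) ℝ :=
  Matrix.of fun I J =>
    if ∀ x y, π.r x y → Fin.append I J x = Fin.append I J y then (1 : ℝ) else 0

/-- The set partition whose blocks are the pairs `{x, f x}` of a (fixed-point-free)
involution `f`, i.e. a perfect matching of `Fin N`. -/
def matchingSetoid {N : ℕ} (f : Fin N → Fin N) (hf : ∀ x, f (f x) = x) : Setoid (Fin N) where
  r x y := y = x ∨ y = f x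
  iseqv := by
    constructor
    · intro x; exact Or.inl rfl
    · rintro x y (rfl | rfl)
      · exact Or.inl rfl
      · right; rw [hf]
    · rintro x y z (rfl | rfl) h
      · exact h
      · rcases h with rfl | rfl
        · right; rfl
        · left; rw [hf]

/-- The matrix `H_α : (ℝⁿ)^{⊗k} → (ℝⁿ)^{⊗l}` associated to an `(l+k)\n`-diagram `α`,
encoded by an involution `f` of `Fin (l+k)` whose fixed points (exactly `n` of them)
are the free vertices: the determinant of the matrix whose columns are the standard
basis vectors indexed by the combined tuple at the free vertices (top row increasing,
then bottom row increasing, i.e. increasing order on `Fin (l+k)`), times the product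
of Kronecker deltas over the size-two blocks. -/
def Hmat (n l k : ℕ) (f : Fin (l + k) → Fin (l + k))
    (hcard : (Finset.univ.filter (fun x => f x = x)).card = n) :
    Matrix (Fin l → Fin n) (Fin k → Fin n) ℝ :=
  Matrix.of fun I J =>
    (Matrix.det (Matrix.of fun r c : Fin n =>
      if r = Fin.append I J
        (((Finset.univ.filter (fun x : Fin (l + k) => f x = x)).orderIsoOfFin hcard c : Fin (l + k)))
      then (1 : ℝ) else 0))
    * ∏ x ∈ Finset.univ.filter (fun x : Fin (l + k) => x < f x),
        (if Fin.append I J x = Fin.append I J (f x) then (1 : ℝ) else 0)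

/-- The relabeling of the vertex set `[l'+k']` of `β` into the side-by-side vertex set
`[(l'+l)+(k'+k)]`: `x ↦ x` for `x ≤ l'` and `l'+y ↦ (l'+l)+y` for `y ∈ [k']`. -/
def embLeft (l' k' l k : ℕ) (x : Fin (l' + k')) : Fin ((l' + l) + (k' + k)) :=
  Fin.addCases (motive := fun _ => Fin ((l' + l) + (k' + k)))
    (fun a => Fin.castAdd (k' + k) (Fin.castAdd l a))
    (fun b => Fin.natAdd (l' + l) (Fin.castAdd k b)) x

/-- The relabeling of the vertex set `[l+k]` of `α` into the side-by-side vertex set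
`[(l'+l)+(k'+k)]`: `x ↦ l'+x` for `x ≤ l` and `l+y ↦ (l'+l)+k'+y` for `y ∈ [k]`. -/
def embRight (l' k' l k : ℕ) (x : Fin (l + k)) : Fin ((l' + l) + (k' + k)) :=
  Fin.addCases (motive := fun _ => Fin ((l' + l) + (k' + k)))
    (fun a => Fin.castAdd (k' + k) (Fin.natAdd l' a))
    (fun b => Fin.natAdd (l' + l) (Fin.natAdd k' b)) x

lemma embLeft_castAdd (l' k' l k : ℕ) (a : Fin l') :
    embLeft l' k' l k (Fin.castAdd k' a) = Fin.castAdd (k' + k) (Fin.castAdd l a) := by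
  simp [embLeft]

lemma embLeft_natAdd (l' k' l k : ℕ) (b : Fin k') :
    embLeft l' k' l k (Fin.natAdd l' b) = Fin.natAdd (l' + l) (Fin.castAdd k b) := by
  simp [embLeft]

lemma embRight_castAdd (l' k' l k : ℕ) (a : Fin l) :
    embRight l' k' l k (Fin.castAdd k a) = Fin.castAdd (k' + k) (Fin.natAdd l' a) := by
  simp [embRight]

lemma embRight_natAdd (l' k' l k : ℕ) (b : Fin k) :
    embRight l' k' l k (Fin.natAdd l b) = Fin.natAdd (l' + l) (Fin.natAdd k' b) := by
  simp [embRight]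

lemma embLeft_val (l' k' l k : ℕ) (x : Fin (l' + k')) :
    (embLeft l' k' l k x : ℕ) = if (x : ℕ) < l' then (x : ℕ) else l + x := by
  induction x using Fin.addCases with
  | left a => rw [embLeft_castAdd]; simp [a.is_lt]
  | right b => rw [embLeft_natAdd]; simp; omega

lemma embRight_val (l' k' l k : ℕ) (x : Fin (l + k)) :
    (embRight l' k' l k x : ℕ) = if (x : ℕ) < l then l' + x else l' + k' + x := by
  induction x using Fin.addCases with
  | left a => rw [embRight_castAdd]; simp [a.is_lt]
  | right b => rw [embRight_natAdd]; simp; omega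

lemma embLeft_strictMono (l' k' l k : ℕ) : StrictMono (embLeft l' k' l k) := by
  intro x y h
  have hx := x.is_lt; have hy := y.is_lt
  have h' : (x : ℕ) < (y : ℕ) := h
  rw [Fin.lt_iff_val_lt_val, embLeft_val, embLeft_val]
  split_ifs <;> omega

lemma embRight_strictMono (l' k' l k : ℕ) : StrictMono (embRight l' k' l k) := by
  intro x y h
  have hx := x.is_lt; have hy := y.is_lt
  have h' : (x : ℕ) < (y : ℕ) := h
  rw [Fin.lt_iff_val_lt_val, embRight_val, embRight_val]
  split_ifs <;> omega

lemma embLeft_ne_embRight (l' k' l k : ℕ) (x : Fin (l' + k')) (y : Fin (l + k)) :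
    embLeft l' k' l k x ≠ embRight l' k' l k y := by
  intro h
  have hx := x.is_lt; have hy := y.is_lt
  have : (embLeft l' k' l k x : ℕ) = (embRight l' k' l k y : ℕ) := by rw [h]
  rw [embLeft_val, embRight_val] at this
  split_ifs at this <;> omega

lemma emb_surj (l' k' l k : ℕ) (z : Fin ((l' + l) + (k' + k))) :
    (∃ x, embLeft l' k' l k x = z) ∨ (∃ x, embRight l' k' l k x = z) := by
  induction z using Fin.addCases with
  | left c =>
    induction c using Fin.addCases with
    | left a => exact Or.inl ⟨Fin.castAdd k' a, embLeft_castAdd ..⟩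
    | right a => exact Or.inr ⟨Fin.castAdd k a, embRight_castAdd ..⟩
  | right c =>
    induction c using Fin.addCases with
    | left b => exact Or.inl ⟨Fin.natAdd l' b, embLeft_natAdd ..⟩
    | right b => exact Or.inr ⟨Fin.natAdd l b, embRight_natAdd ..⟩

lemma append_embLeft {n l' k' l k : ℕ} (I' : Fin l' → Fin n) (I : Fin l → Fin n)
    (J' : Fin k' → Fin n) (J : Fin k → Fin n) (x : Fin (l' + k')) :
    Fin.append (Fin.append I' I) (Fin.append J' J) (embLeft l' k' l k x) =
      Fin.append I' J' x := by
  induction x using Fin.addCases with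
  | left a => rw [embLeft_castAdd]; simp [Fin.append_left, Fin.append_right]
  | right b => rw [embLeft_natAdd]; simp [Fin.append_left, Fin.append_right]

lemma append_embRight {n l' k' l k : ℕ} (I' : Fin l' → Fin n) (I : Fin l → Fin n)
    (J' : Fin k' → Fin n) (J : Fin k → Fin n) (x : Fin (l + k)) :
    Fin.append (Fin.append I' I) (Fin.append J' J) (embRight l' k' l k x) =
      Fin.append I J x := by
  induction x using Fin.addCases with
  | left a => rw [embRight_castAdd]; simp [Fin.append_left, Fin.append_right]
  | right b => rw [embRight_natAdd]; simp [Fin.append_left, Fin.append_right]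

/-- for a perfect matching `β` of `[l'+k']` (encoded by a fixed-point-free
involution `f'`) and an `(l+k)\n`-diagram `α` (encoded by an involution `f` with exactly
`n` fixed points), with `F` the side-by-side diagram `β ⊗ α` of `[(l'+l)+(k'+k)]`
(characterized by commuting with the two relabelings; it is an `((l'+l)+(k'+k))\n`-diagram),
one has `E_β ⊗ H_α = H_{β⊗α}` under the canonical identifications of tensor powers;
entrywise, `H_{β⊗α}((I',I),(J',J)) = E_β(I',J') · H_α(I,J)`. -/
theorem Ematrix_tensor_Hmat (n l' k' l k : ℕ) (hn : 0 < n)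
    (f' : Fin (l' + k') → Fin (l' + k')) (hf' : ∀ x, f' (f' x) = x) (hf'' : ∀ x, f' x ≠ x)
    (f : Fin (l + k) → Fin (l + k)) (hf : ∀ x, f (f x) = x)
    (hcard : (Finset.univ.filter (fun x => f x = x)).card = n)
    (F : Fin ((l' + l) + (k' + k)) → Fin ((l' + l) + (k' + k)))
    (hF₁ : ∀ x, F (embLeft l' k' l k x) = embLeft l' k' l k (f' x))
    (hF₂ : ∀ x, F (embRight l' k' l k x) = embRight l' k' l k (f x))
    (hFinv : ∀ x, F (F x) = x)
    (hFcard : (Finset.univ.filter (fun x => F x = x)).card = n)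
    (I' : Fin l' → Fin n) (I : Fin l → Fin n) (J' : Fin k' → Fin n) (J : Fin k → Fin n) :
    Hmat n (l' + l) (k' + k) F hFcard (Fin.append I' I) (Fin.append J' J) =
      Dmat n l' k' (matchingSetoid f' hf') I' J' * Hmat n l k f hcard I J := by
  have hLinj : Function.Injective (embLeft l' k' l k) := (embLeft_strictMono l' k' l k).injective
  have hRinj : Function.Injective (embRight l' k' l k) := (embRight_strictMono l' k' l k).injective
  -- fixed point sets
  have hfix : (Finset.univ.filter (fun x => F x = x)) =
      (Finset.univ.filter (fun x => f x = x)).image (embRight l' k' l k) := by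
    ext z
    simp only [Finset.mem_filter, Finset.mem_image, Finset.mem_univ, true_and]
    rcases emb_surj l' k' l k z with ⟨x, rfl⟩ | ⟨x, rfl⟩
    · constructor
      · intro h
        rw [hF₁] at h
        exact absurd (hLinj h) (hf'' x)
      · rintro ⟨y, -, h⟩
        exact absurd h.symm (embLeft_ne_embRight l' k' l k x y)
    · constructor
      · intro h
        rw [hF₂] at h
        exact ⟨x, hRinj h, rfl⟩
      · rintro ⟨y, hy, h⟩
        obtain rfl := hRinj h
        rw [hF₂, hy]
  -- order isomorphisms of the fixed point sets
  have hord : ∀ c : Fin n,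
      (((Finset.univ.filter (fun x => F x = x)).orderIsoOfFin hFcard c : Fin ((l' + l) + (k' + k)))) =
      embRight l' k' l k
        (((Finset.univ.filter (fun x => f x = x)).orderIsoOfFin hcard c : Fin (l + k))) := by
    have hmono : StrictMono (fun c : Fin n => embRight l' k' l k
        ((Finset.univ.filter (fun x => f x = x)).orderEmbOfFin hcard c)) :=
      (embRight_strictMono l' k' l k).comp
        ((Finset.univ.filter (fun x => f x = x)).orderEmbOfFin hcard).strictMono
    have hmem : ∀ c : Fin n, embRight l' k' l k
        ((Finset.univ.filter (fun x => f x = x)).orderEmbOfFin hcard c) ∈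
        (Finset.univ.filter (fun x => F x = x)) := by
      intro c
      rw [hfix]
      exact Finset.mem_image_of_mem _ (Finset.orderEmbOfFin_mem _ hcard c)
    have huniq := Finset.orderEmbOfFin_unique hFcard hmem hmono
    intro c
    rw [Finset.coe_orderIsoOfFin_apply, Finset.coe_orderIsoOfFin_apply, ← congrFun huniq c]
  -- determinant parts agree
  have hdet : (Matrix.of fun r c : Fin n =>
      if r = Fin.append (Fin.append I' I) (Fin.append J' J)
        (((Finset.univ.filter (fun x => F x = x)).orderIsoOfFin hFcard c :
          Fin ((l' + l) + (k' + k))))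
      then (1 : ℝ) else 0).det =
      (Matrix.of fun r c : Fin n =>
      if r = Fin.append I J
        (((Finset.univ.filter (fun x => f x = x)).orderIsoOfFin hcard c : Fin (l + k)))
      then (1 : ℝ) else 0).det := by
    congr 1
    ext r c
    rw [Matrix.of_apply, Matrix.of_apply, hord c, append_embRight]
  -- the crossing set splits
  have hdisj : Disjoint
      ((Finset.univ.filter (fun y => y < f' y)).image (embLeft l' k' l k))
      ((Finset.univ.filter (fun y => y < f y)).image (embRight l' k' l k)) := by
    rw [Finset.disjoint_left]
    rintro a ha hb
    obtain ⟨y, -, rfl⟩ := Finset.mem_image.mp ha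
    obtain ⟨z, -, h⟩ := Finset.mem_image.mp hb
    exact embLeft_ne_embRight l' k' l k y z h.symm
  have hsplit : Finset.univ.filter (fun x => x < F x) =
      (Finset.univ.filter (fun y => y < f' y)).image (embLeft l' k' l k) ∪
      (Finset.univ.filter (fun y => y < f y)).image (embRight l' k' l k) := by
    ext z
    simp only [Finset.mem_filter, Finset.mem_union, Finset.mem_image, Finset.mem_univ, true_and]
    rcases emb_surj l' k' l k z with ⟨x, rfl⟩ | ⟨x, rfl⟩
    · rw [hF₁]
      constructor
      · intro h
        exact Or.inl ⟨x, (embLeft_strictMono l' k' l k).lt_iff_lt.mp h, rfl⟩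
      · rintro (⟨y, hy, h⟩ | ⟨y, hy, h⟩)
        · obtain rfl := hLinj h
          exact (embLeft_strictMono l' k' l k).lt_iff_lt.mpr hy
        · exact absurd h.symm (embLeft_ne_embRight l' k' l k x y)
    · rw [hF₂]
      constructor
      · intro h
        exact Or.inr ⟨x, (embRight_strictMono l' k' l k).lt_iff_lt.mp h, rfl⟩
      · rintro (⟨y, hy, h⟩ | ⟨y, hy, h⟩)
        · exact absurd h (embLeft_ne_embRight l' k' l k y x)
        · obtain rfl := hRinj h
          exact (embRight_strictMono l' k' l k).lt_iff_lt.mpr hy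
  -- product part splits
  have hprod : (∏ x ∈ Finset.univ.filter (fun x => x < F x),
        (if Fin.append (Fin.append I' I) (Fin.append J' J) x =
            Fin.append (Fin.append I' I) (Fin.append J' J) (F x) then (1 : ℝ) else 0)) =
      (∏ y ∈ Finset.univ.filter (fun y => y < f' y),
        (if Fin.append I' J' y = Fin.append I' J' (f' y) then (1 : ℝ) else 0)) *
      (∏ y ∈ Finset.univ.filter (fun y => y < f y),
        (if Fin.append I J y = Fin.append I J (f y) then (1 : ℝ) else 0)) := by
    rw [hsplit, Finset.prod_union hdisj,
      Finset.prod_image (fun a _ b _ h => hLinj h),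
      Finset.prod_image (fun a _ b _ h => hRinj h)]
    congr 1
    · refine Finset.prod_congr rfl fun y _ => ?_
      rw [hF₁, append_embLeft, append_embLeft]
    · refine Finset.prod_congr rfl fun y _ => ?_
      rw [hF₂, append_embRight, append_embRight]
  -- the Dmat entry is the product over the matching
  have hD : Dmat n l' k' (matchingSetoid f' hf') I' J' =
      ∏ y ∈ Finset.univ.filter (fun y => y < f' y),
        (if Fin.append I' J' y = Fin.append I' J' (f' y) then (1 : ℝ) else 0) := by
    rw [Finset.prod_boole]
    have hiff : (∀ x y, (matchingSetoid f' hf').r x y →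
        Fin.append I' J' x = Fin.append I' J' y) ↔
        (∀ i ∈ Finset.univ.filter (fun y => y < f' y),
          Fin.append I' J' i = Fin.append I' J' (f' i)) := by
      constructor
      · intro h y _
        exact h y (f' y) (Or.inr rfl)
      · intro h x y hxy
        rcases hxy with rfl | rfl
        · rfl
        · rcases lt_trichotomy x (f' x) with hlt | heq | hgt
          · exact h x (Finset.mem_filter.mpr ⟨Finset.mem_univ _, hlt⟩)
          · exact absurd heq.symm (hf'' x)
          · have := h (f' x)
              (Finset.mem_filter.mpr ⟨Finset.mem_univ _, by rw [hf']; exact hgt⟩)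
            rw [hf'] at this
            exact this.symm
    simp only [Dmat, Matrix.of_apply]
    by_cases hc : ∀ x y, (matchingSetoid f' hf').r x y →
        Fin.append I' J' x = Fin.append I' J' y
    · rw [if_pos hc, if_pos (hiff.mp hc)]
    · rw [if_neg hc, if_neg (fun h => hc (hiff.mpr h))]
  simp only [Hmat, Matrix.of_apply]
  rw [hdet, hprod, hD]
  ring
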